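/- arXiv:2406.12767 — 3 statements merged into one kernel-verified Lean document; each statement's English description precedes it below -/
import Mathlib

section
/- Up to translation of the torus T^2 = R^2/Z^2, there is exactly one geometric triple grid diagram modeled on the unique Tait-colored cubic graph with 4 vertices whose three color classes each form a perfect matching and which is not the disjoint union of theta graphs. Equivalently, the based moduli space M_0(Γ) for this graph (b = 2) is a single point. -/
/-- The torus T² = ℝ²/ℤ². -/
abbrev Torus2 : Type := AddCircle (1 : ℝ) × AddCircle (1 : ℝ)

/-- Red edges of the b = 2 graph: {v₀,v₁}, {v₂,v₃}. -/
def redEdge (i j : Fin 4) : Prop :=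
  (i = 0 ∧ j = 1) ∨ (i = 1 ∧ j = 0) ∨ (i = 2 ∧ j = 3) ∨ (i = 3 ∧ j = 2)

/-- Blue edges of the b = 2 graph: {v₀,v₂}, {v₁,v₃}. -/
def blueEdge (i j : Fin 4) : Prop :=
  (i = 0 ∧ j = 2) ∨ (i = 2 ∧ j = 0) ∨ (i = 1 ∧ j = 3) ∨ (i = 3 ∧ j = 1)

/-- Green edges of the b = 2 graph: {v₀,v₃}, {v₁,v₂}. -/
def greenEdge (i j : Fin 4) : Prop :=
  (i = 0 ∧ j = 3) ∨ (i = 3 ∧ j = 0) ∨ (i = 1 ∧ j = 2) ∨ (i = 2 ∧ j = 1)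

noncomputable def hv : AddCircle (1:ℝ) := ((1/2 : ℝ) : AddCircle (1:ℝ))

lemma hv_ne_zero : hv ≠ 0 := by
  intro h
  rw [hv, AddCircle.coe_eq_zero_iff] at h
  obtain ⟨n, hn⟩ := h
  have : (n : ℝ) = 1/2 := by simpa using hn
  have := congrArg (· * 2) this
  simp at this
  have : (2 * n : ℤ) = 1 := by exact_mod_cast (by linarith [this] : (2 * n : ℝ) = 1)
  omega

lemma hv_add_hv : hv + hv = 0 := by
  rw [hv, ← AddCircle.coe_add, AddCircle.coe_eq_zero_iff]
  exact ⟨1, by norm_num⟩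

lemma two_torsion (x : AddCircle (1:ℝ)) (hx : x + x = 0) (h0 : x ≠ 0) : x = hv := by
  induction x using QuotientAddGroup.induction_on with
  | H r =>
  rw [← AddCircle.coe_add, AddCircle.coe_eq_zero_iff] at hx
  obtain ⟨n, hn⟩ := hx
  simp only [zsmul_eq_mul, mul_one] at hn
  rcases Int.even_or_odd n with ⟨k, hk⟩ | ⟨k, hk⟩
  · exfalso; apply h0
    rw [AddCircle.coe_eq_zero_iff]
    exact ⟨k, by push_cast [hk] at hn; simp only [zsmul_eq_mul, mul_one]; linarith⟩
  · have hr : r = (k : ℝ) + 1/2 := by push_cast [hk] at hn; linarith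
    rw [hr, hv]
    rw [AddCircle.coe_add]
    have hk0 : ((k:ℝ) : AddCircle (1:ℝ)) = 0 :=
      (AddCircle.coe_eq_zero_iff _).mpr ⟨k, by simp⟩
    rw [hk0, zero_add]

noncomputable def psi : Fin 4 → Torus2 := ![(0,0),(0,hv),(hv,0),(hv,hv)]

/-- There is exactly one based geometric triple grid diagram (the designated vertex v₀
is sent to (0,0)) modeled on the unique Tait-colored cubic graph with 4 vertices whose
color classes are perfect matchings and which is not a union of theta graphs:
the based moduli space 𝓜₀(Γ) for b = 2 is a single point. -/
theorem b2_based_moduli_unique :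
    ∃! φ : Fin 4 → Torus2,
      Function.Injective φ ∧
      (∀ i j : Fin 4, i ≠ j → (((φ i).1 = (φ j).1) ↔ redEdge i j)) ∧
      (∀ i j : Fin 4, i ≠ j → (((φ i).2 = (φ j).2) ↔ blueEdge i j)) ∧
      (∀ i j : Fin 4, i ≠ j →
        (((φ i).1 + (φ i).2 = (φ j).1 + (φ j).2) ↔ greenEdge i j)) ∧
      φ 0 = (0, 0) := by
  have hne := hv_ne_zero
  have hadd := hv_add_hv
  refine ⟨psi, ⟨?_, ?_, ?_, ?_, rfl⟩, ?_⟩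
  · intro i j hij
    fin_cases i <;> fin_cases j <;>
      simp_all [psi, Prod.ext_iff] <;> tauto
  · intro i j hij
    fin_cases i <;> fin_cases j <;>
      simp_all [psi, redEdge] <;> tauto
  · intro i j hij
    fin_cases i <;> fin_cases j <;>
      simp_all [psi, blueEdge] <;> tauto
  · intro i j hij
    fin_cases i <;> fin_cases j <;>
      simp_all [psi, greenEdge] <;>
      first
      | tauto
      | (intro h; exact hne (by rw [← hadd] at h; abel_nf at h ⊢; linear_combination h))
  · rintro φ ⟨hinj, hr, hb, hg, h0⟩
    have h0x : (φ 0).1 = 0 := by rw [h0]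
    have h0y : (φ 0).2 = 0 := by rw [h0]
    have hx1 : (φ 1).1 = 0 := by
      have := (hr 0 1 (by decide)).mpr (by simp [redEdge])
      rw [h0x] at this; exact this.symm
    have hy2 : (φ 2).2 = 0 := by
      have := (hb 0 2 (by decide)).mpr (by simp [blueEdge])
      rw [h0y] at this; exact this.symm
    have hx3 : (φ 3).1 = (φ 2).1 := by
      have := (hr 2 3 (by decide)).mpr (by simp [redEdge]); exact this.symm
    have hy3 : (φ 3).2 = (φ 1).2 := by
      have := (hb 1 3 (by decide)).mpr (by simp [blueEdge]); exact this.symm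
    have hg03 : (0:AddCircle (1:ℝ)) = (φ 2).1 + (φ 1).2 := by
      have := (hg 0 3 (by decide)).mpr (by simp [greenEdge])
      rw [h0x, h0y, hx3, hy3, zero_add] at this; exact this
    have hg12 : (φ 1).2 = (φ 2).1 := by
      have := (hg 1 2 (by decide)).mpr (by simp [greenEdge])
      rw [hx1, hy2, zero_add, add_zero] at this; exact this
    have hy1ne : (φ 1).2 ≠ 0 := by
      intro h
      have := (hb 0 1 (by decide)).mp (by rw [h0y, h])
      simp [blueEdge] at this
    have hy1 : (φ 1).2 = hv := by
      refine two_torsion _ ?_ hy1ne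
      calc (φ 1).2 + (φ 1).2 = (φ 2).1 + (φ 1).2 := by rw [hg12]
        _ = 0 := hg03.symm
    funext i
    fin_cases i <;> simp [psi]
    · exact h0
    · exact Prod.ext hx1 hy1
    · exact Prod.ext (by rw [← hg12, hy1]) hy2
    · exact Prod.ext (by rw [hx3, ← hg12, hy1]) (by rw [hy3, hy1])
end

section
/- Let x ∈ C^1(Γ,T^2) be an exact 1-cochain (x = d_T φ for some φ: V(Γ) → T^2) and let S ⊆ C^1(Γ,T^2) be the subgroup of cochains valued in S^1×{0} on red edges, {0}×S^1 on blue edges, and the diagonal circle on green edges. Then x ∈ S if and only if there exist a lift x̃ ∈ Im(d_R) ⊆ C^1(Γ,R^2) of some representative and an integral cochain ρ ∈ C^1(Γ,Z^2) representing a class of H^1(Γ,Z^2) such that x̃ + ρ lies in the linear slope subspace S̃ ⊆ C^1(Γ,R^2). -/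
/-- Slope condition in ℝ² for a color (0 = red: ℝ×{0}, 1 = blue: {0}×ℝ,
2 = green: the diagonal {(t,t)}). -/
def slopeCondR : Fin 3 → ℝ × ℝ → Prop
  | 0 => fun v => v.2 = 0
  | 1 => fun v => v.1 = 0
  | 2 => fun v => v.1 = v.2

/-- Slope condition in T² for a color (0 = red: S¹×{0}, 1 = blue: {0}×S¹,
2 = green: the diagonal circle). -/
def slopeCondT : Fin 3 → Torus2 → Prop
  | 0 => fun v => v.2 = 0
  | 1 => fun v => v.1 = 0
  | 2 => fun v => v.1 = v.2

lemma coe_zero_iff (r : ℝ) : ((r : AddCircle (1:ℝ)) = 0) ↔ ∃ n : ℤ, r = n := by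
  rw [AddCircle.coe_eq_zero_iff]
  simp [eq_comm]

lemma coe_eq_iff (a b : ℝ) : ((a : AddCircle (1:ℝ)) = b) ↔ ∃ n : ℤ, a - b = n := by
  rw [← sub_eq_zero, ← AddCircle.coe_sub, coe_zero_iff]

/-- An exact T²-valued 1-cochain x = d_{T²}φ on a Tait-colored graph satisfies the
slope conditions S iff some exact real lift x̃ ∈ Im(d_ℝ) of a representative, corrected
by an integral 1-cochain ρ ∈ C¹(Γ,ℤ²), lies in the linear slope subspace S̃ ⊆ C¹(Γ,ℝ²). -/
theorem torus_slope_iff_integral_lift {V E : Type*} [Fintype V] [Fintype E]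
    (s t : E → V) (col : E → Fin 3) (φ : V → Torus2)
    (x : E → Torus2) (hx : ∀ e : E, x e = φ (t e) - φ (s e)) :
    (∀ e : E, slopeCondT (col e) (x e)) ↔
      (∃ (X : V → ℝ × ℝ) (ρ : E → ℤ × ℤ),
        (∀ e : E, x e =
          ((↑((X (t e)).1 - (X (s e)).1) : AddCircle (1 : ℝ)),
           (↑((X (t e)).2 - (X (s e)).2) : AddCircle (1 : ℝ)))) ∧
        (∀ e : E, slopeCondR (col e)
          (X (t e) - X (s e) + (((ρ e).1 : ℝ), ((ρ e).2 : ℝ))))) := by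
  constructor
  · intro hS
    -- choose real lifts of φ
    have h1 : ∀ v, ∃ r : ℝ, (r : AddCircle (1:ℝ)) = (φ v).1 := fun v =>
      QuotientAddGroup.mk_surjective (φ v).1
    have h2 : ∀ v, ∃ r : ℝ, (r : AddCircle (1:ℝ)) = (φ v).2 := fun v =>
      QuotientAddGroup.mk_surjective (φ v).2
    choose f1 hf1 using h1
    choose f2 hf2 using h2
    refine ⟨fun v => (f1 v, f2 v), ?_⟩
    have hx1 : ∀ e, (x e).1 = ((f1 (t e) - f1 (s e) : ℝ) : AddCircle (1:ℝ)) := by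
      intro e
      rw [hx e, AddCircle.coe_sub, hf1, hf1]; rfl
    have hx2 : ∀ e, (x e).2 = ((f2 (t e) - f2 (s e) : ℝ) : AddCircle (1:ℝ)) := by
      intro e
      rw [hx e, AddCircle.coe_sub, hf2, hf2]; rfl
    have hρ : ∀ e, ∃ p : ℤ × ℤ, slopeCondR (col e)
        ((f1 (t e), f2 (t e)) - (f1 (s e), f2 (s e)) + ((p.1 : ℝ), (p.2 : ℝ))) := by
      intro e
      have hc := hS e
      have h3 : col e = 0 ∨ col e = 1 ∨ col e = 2 := by omega
      rcases h3 with h | h | h <;> rw [h] at hc ⊢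
      · -- red: second component in ℤ
        have : ((f2 (t e) - f2 (s e) : ℝ) : AddCircle (1:ℝ)) = 0 := by
          rw [← hx2 e]; exact hc
        obtain ⟨n, hn⟩ := (coe_zero_iff _).mp this
        exact ⟨(0, -n), by simp [slopeCondR, Prod.ext_iff, hn]⟩
      · have : ((f1 (t e) - f1 (s e) : ℝ) : AddCircle (1:ℝ)) = 0 := by
          rw [← hx1 e]; exact hc
        obtain ⟨n, hn⟩ := (coe_zero_iff _).mp this
        exact ⟨(-n, 0), by simp [slopeCondR, Prod.ext_iff, hn]⟩
      · have : ((f1 (t e) - f1 (s e) : ℝ) : AddCircle (1:ℝ))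
            = ((f2 (t e) - f2 (s e) : ℝ) : AddCircle (1:ℝ)) := by
          rw [← hx1 e, ← hx2 e]; exact hc
        obtain ⟨n, hn⟩ := (coe_eq_iff _ _).mp this
        refine ⟨(0, n), ?_⟩
        simp only [slopeCondR, Prod.fst_add, Prod.snd_add, Prod.fst_sub, Prod.snd_sub]
        push_cast
        linarith
    choose ρ hρ using hρ
    exact ⟨ρ, fun e => Prod.ext (hx1 e) (hx2 e), hρ⟩
  · rintro ⟨X, ρ, hlift, hslope⟩ e
    have hc := hslope e
    have h3 : col e = 0 ∨ col e = 1 ∨ col e = 2 := by omega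
    rcases h3 with h | h | h <;> rw [h] at hc ⊢ <;>
      simp only [slopeCondR, slopeCondT, Prod.fst_add, Prod.snd_add, Prod.fst_sub,
        Prod.snd_sub] at hc ⊢ <;> rw [hlift e]
    · show ((((X (t e)).2 - (X (s e)).2 : ℝ)) : AddCircle (1:ℝ)) = 0
      rw [coe_zero_iff]
      exact ⟨-(ρ e).2, by push_cast; linarith⟩
    · show ((((X (t e)).1 - (X (s e)).1 : ℝ)) : AddCircle (1:ℝ)) = 0
      rw [coe_zero_iff]
      exact ⟨-(ρ e).1, by push_cast; linarith⟩
    · show ((((X (t e)).1 - (X (s e)).1 : ℝ)) : AddCircle (1:ℝ))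
        = ((((X (t e)).2 - (X (s e)).2 : ℝ)) : AddCircle (1:ℝ))
      rw [coe_eq_iff]
      exact ⟨(ρ e).2 - (ρ e).1, by push_cast; linarith⟩
end

section
/- For the Tait-colored graph K_{3,3} (with b = 3), the configuration φ: V(K_{3,3}) → T^2 can be chosen injectively satisfying all slope conditions: there exist 6 pairwise distinct points in T^2 realizing the red edges as vertical segments, blue edges as horizontal segments, and green edges as slope −1 segments, matching the unique Tait coloring of K_{3,3}; hence the moduli space M(K_{3,3}) is nonempty. -/
/-- Red edges of the Tait-colored K₃,₃ (vertices 0,1,2 = u₁,u₂,u₃ and 3,4,5 = w₁,w₂,w₃):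
the edges {uₖ, wₖ}. -/
def K33red (i j : Fin 6) : Prop :=
  ∃ k : Fin 3, (i.val = k.val ∧ j.val = 3 + k.val) ∨ (j.val = k.val ∧ i.val = 3 + k.val)

/-- Blue edges of the Tait-colored K₃,₃: the edges {uₖ, w_{k+1}} (indices mod 3). -/
def K33blue (i j : Fin 6) : Prop :=
  ∃ k : Fin 3, (i.val = k.val ∧ j.val = 3 + (k.val + 1) % 3) ∨
    (j.val = k.val ∧ i.val = 3 + (k.val + 1) % 3)

/-- Green edges of the Tait-colored K₃,₃: the edges {uₖ, w_{k+2}} (indices mod 3). -/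
def K33green (i j : Fin 6) : Prop :=
  ∃ k : Fin 3, (i.val = k.val ∧ j.val = 3 + (k.val + 2) % 3) ∨
    (j.val = k.val ∧ i.val = 3 + (k.val + 2) % 3)


noncomputable def Qpt (k : Fin 3) : AddCircle (1 : ℝ) := ((k.val / 3 : ℝ) : AddCircle (1 : ℝ))

set_option maxHeartbeats 1000000 in
lemma Qpt.coe_sub_one (x : ℝ) :
    ((x - 1 : ℝ) : AddCircle (1:ℝ)) = ((x : ℝ) : AddCircle (1:ℝ)) := by
  rw [AddCircle.coe_sub, AddCircle.coe_period, sub_zero]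

lemma Qpt_inj : Function.Injective Qpt := by
  have h : ∀ k : Fin 3, (k.val / 3 : ℝ) ∈ Set.Ico (0:ℝ) (0 + 1) := by
    intro k; fin_cases k <;> norm_num
  intro a b hab
  have := (AddCircle.coe_eq_coe_iff_of_mem_Ico (h a) (h b)).mp hab
  fin_cases a <;> fin_cases b <;> simp_all <;> norm_num at this

lemma Qpt_add (a b : Fin 3) : Qpt a + Qpt b = Qpt (a + b) := by
  fin_cases a <;> fin_cases b <;>
      simp only [Qpt, Fin.add_def, ← AddCircle.coe_add] <;> norm_num
  all_goals rw [← Qpt.coe_sub_one (4/3)]; norm_num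

noncomputable def ψK33 : Fin 6 → Torus2 :=
  ![(Qpt 0, Qpt 0), (Qpt 1, Qpt 1), (Qpt 2, Qpt 2),
    (Qpt 0, Qpt 2), (Qpt 1, Qpt 0), (Qpt 2, Qpt 1)]

@[simp] lemma psiK0 : ψK33 0 = (Qpt 0, Qpt 0) := rfl
@[simp] lemma psiK1 : ψK33 1 = (Qpt 1, Qpt 1) := rfl
@[simp] lemma psiK2 : ψK33 2 = (Qpt 2, Qpt 2) := rfl
@[simp] lemma psiK3 : ψK33 3 = (Qpt 0, Qpt 2) := rfl
@[simp] lemma psiK4 : ψK33 4 = (Qpt 1, Qpt 0) := rfl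
@[simp] lemma psiK5 : ψK33 5 = (Qpt 2, Qpt 1) := rfl

/-- There is an injective map of the six vertices of the Tait-colored K₃,₃ into the
torus realizing red edges as vertical alignments, blue edges as horizontal alignments,
and green edges as slope −1 alignments: the moduli space 𝓜(K₃,₃) is nonempty. -/
theorem K33_moduli_nonempty :
    ∃ φ : Fin 6 → Torus2, Function.Injective φ ∧
      (∀ i j : Fin 6, i ≠ j → (((φ i).1 = (φ j).1) ↔ K33red i j)) ∧
      (∀ i j : Fin 6, i ≠ j → (((φ i).2 = (φ j).2) ↔ K33blue i j)) ∧
      (∀ i j : Fin 6, i ≠ j →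
        (((φ i).1 + (φ i).2 = (φ j).1 + (φ j).2) ↔ K33green i j)) := by
  refine ⟨ψK33, ?_, ?_, ?_, ?_⟩
  · intro i j hij
    fin_cases i <;> fin_cases j <;> simp_all [Prod.ext_iff, Qpt_inj.eq_iff]
  · intro i j hij
    fin_cases i <;> fin_cases j <;>
      simp_all [Qpt_inj.eq_iff, K33red] <;> decide
  · intro i j hij
    fin_cases i <;> fin_cases j <;>
      simp_all [Qpt_inj.eq_iff, K33blue] <;> decide
  · intro i j hij
    fin_cases i <;> fin_cases j <;>
      simp_all [Qpt_add, Qpt_inj.eq_iff, K33green] <;> decide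
end
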